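/- In the logistic regression model, every minimizer θ* of F over R^d satisfies τ ‖θ*‖² ≤ ln 4. -/

import Mathlib

open Matrix Real
open scoped BigOperators

noncomputable section

/-- `‖X_i‖`, the Euclidean norm of the covariate vector. -/
def nrmX {d : ℕ} (Xi : Fin d → ℝ) : ℝ := Real.sqrt (Xi ⬝ᵥ Xi)

/-- `𝗌_i(z) := z X_i / (‖X_i‖ σ²)`. -/
def sStat {d : ℕ} (Xi : Fin d → ℝ) (σ : ℝ) (z : ℝ) : Fin d → ℝ :=
  (z / (nrmX Xi * σ ^ 2)) • Xi

/-- `Ω := ((1/(σ²n)) ∑_i X_i X_iᵀ/‖X_i‖² + 2τ I_d)⁻¹`. -/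
def OmegaMat (d n : ℕ) (X : Fin n → Fin d → ℝ) (σ τ : ℝ) : Matrix (Fin d) (Fin d) ℝ :=
  ((σ ^ 2 * (n : ℝ))⁻¹ • ∑ i, (X i ⬝ᵥ X i)⁻¹ • vecMulVec (X i) (X i)
      + (2 * τ) • (1 : Matrix (Fin d) (Fin d) ℝ))⁻¹

/-- `R(θ) := (1/2) θᵀ Ω⁻¹ θ`. -/
def Rpen (d n : ℕ) (X : Fin n → Fin d → ℝ) (σ τ : ℝ) (θ : Fin d → ℝ) : ℝ :=
  (1 / 2) * (θ ⬝ᵥ (OmegaMat d n X σ τ)⁻¹.mulVec θ)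

/-- The objective `F`: normalized negative penalized log-likelihood of the logistic
regression model with Gaussian predictors, written with one-dimensional integrals. -/
def Fobj (d n : ℕ) (X : Fin n → Fin d → ℝ) (y : Fin n → ℝ) (σ τ : ℝ) (θ : Fin d → ℝ) : ℝ :=
  -(n : ℝ)⁻¹ * ∑ i, Real.log (∫ z : ℝ,
      (1 + Real.exp (-(y i * nrmX (X i) * z)))⁻¹ * Real.exp (sStat (X i) σ z ⬝ᵥ θ)
        * Real.exp (-z ^ 2 / (2 * σ ^ 2)))
    + Rpen d n X σ τ θ

namespace MinAux

open MeasureTheory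

lemma integral_exp_lin_gauss {b : ℝ} (hb : 0 < b) (a : ℝ) :
    ∫ z : ℝ, Real.exp (a * z) * Real.exp (-b * z ^ 2) =
      Real.sqrt (π / b) * Real.exp (a ^ 2 / (4 * b)) := by
  have key : ∀ z : ℝ, Real.exp (a * z) * Real.exp (-b * z ^ 2)
      = Real.exp (-b * (z - a / (2 * b)) ^ 2) * Real.exp (a ^ 2 / (4 * b)) := by
    intro z
    rw [← Real.exp_add, ← Real.exp_add]
    congr 1
    field_simp
    ring
  simp_rw [key]
  rw [MeasureTheory.integral_mul_const,
    MeasureTheory.integral_sub_right_eq_self (fun z : ℝ => Real.exp (-b * z ^ 2)) (a / (2 * b)),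
    integral_gaussian]

lemma integrable_exp_lin_gauss {b : ℝ} (hb : 0 < b) (a : ℝ) :
    Integrable (fun z : ℝ => Real.exp (a * z) * Real.exp (-b * z ^ 2)) := by
  have key : (fun z : ℝ => Real.exp (a * z) * Real.exp (-b * z ^ 2))
      = fun z : ℝ => Real.exp (-b * (z - a / (2 * b)) ^ 2) * Real.exp (a ^ 2 / (4 * b)) := by
    funext z
    rw [← Real.exp_add, ← Real.exp_add]
    congr 1
    field_simp
    ring
  rw [key]
  exact ((integrable_exp_neg_mul_sq hb).comp_sub_right (a / (2 * b))).mul_const _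

lemma cont_logistic (k : ℝ) : Continuous fun z : ℝ => (1 + Real.exp (-(k * z)))⁻¹ := by
  apply Continuous.inv₀
  · fun_prop
  · intro z; positivity

lemma integrable_main {b : ℝ} (hb : 0 < b) (a k : ℝ) :
    Integrable (fun z : ℝ =>
      (1 + Real.exp (-(k * z)))⁻¹ * Real.exp (a * z) * Real.exp (-b * z ^ 2)) := by
  refine (integrable_exp_lin_gauss hb a).mono'
    (Continuous.aestronglyMeasurable ?_) (Filter.Eventually.of_forall fun z => ?_)
  · exact ((cont_logistic k).mul (by fun_prop)).mul (by fun_prop)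
  · rw [Real.norm_eq_abs, abs_of_nonneg (by positivity)]
    have h1 : (1 + Real.exp (-(k * z)))⁻¹ ≤ 1 := by
      rw [inv_le_one_iff₀]
      right
      nlinarith [Real.exp_pos (-(k * z))]
    calc (1 + Real.exp (-(k * z)))⁻¹ * Real.exp (a * z) * Real.exp (-b * z ^ 2)
        ≤ 1 * Real.exp (a * z) * Real.exp (-b * z ^ 2) := by gcongr
      _ = Real.exp (a * z) * Real.exp (-b * z ^ 2) := by ring

lemma integrable_main0 {b : ℝ} (hb : 0 < b) (k : ℝ) :
    Integrable (fun z : ℝ => (1 + Real.exp (-(k * z)))⁻¹ * Real.exp (-b * z ^ 2)) := by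
  refine (integrable_exp_neg_mul_sq hb).mono'
    (Continuous.aestronglyMeasurable ?_) (Filter.Eventually.of_forall fun z => ?_)
  · exact ((cont_logistic k).mul (by fun_prop))
  · rw [Real.norm_eq_abs, abs_of_nonneg (by positivity)]
    have h1 : (1 + Real.exp (-(k * z)))⁻¹ ≤ 1 := by
      rw [inv_le_one_iff₀]; right; nlinarith [Real.exp_pos (-(k * z))]
    calc (1 + Real.exp (-(k * z)))⁻¹ * Real.exp (-b * z ^ 2)
        ≤ 1 * Real.exp (-b * z ^ 2) := by gcongr
      _ = Real.exp (-b * z ^ 2) := one_mul _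

lemma lower_bound_half {b : ℝ} (hb : 0 < b) {k : ℝ} (hk : 0 ≤ k) :
    Real.sqrt (π / b) / 4 ≤
      ∫ z : ℝ, (1 + Real.exp (-(k * z)))⁻¹ * Real.exp (-b * z ^ 2) := by
  set f : ℝ → ℝ := fun z => (1 + Real.exp (-(k * z)))⁻¹ * Real.exp (-b * z ^ 2) with hf
  have hfi : Integrable f := integrable_main0 hb k
  have h1 : ∫ z in Set.Ioi (0:ℝ), f z ≤ ∫ z, f z :=
    setIntegral_le_integral hfi (Filter.Eventually.of_forall fun z => by positivity)
  have h2 : ∫ z in Set.Ioi (0:ℝ), (1/2) * Real.exp (-b * z ^ 2) ≤ ∫ z in Set.Ioi (0:ℝ), f z := by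
    refine setIntegral_mono_on
      (((integrable_exp_neg_mul_sq hb).const_mul _).integrableOn)
      hfi.integrableOn measurableSet_Ioi fun z hz => ?_
    have hz' : (0:ℝ) < z := hz
    have he : Real.exp (-(k * z)) ≤ 1 := Real.exp_le_one_iff.2 (by nlinarith)
    have h3 : (1/2 : ℝ) ≤ (1 + Real.exp (-(k * z)))⁻¹ := by
      rw [le_inv_comm₀ (by norm_num) (by positivity)]
      · nlinarith
    calc (1/2) * Real.exp (-b * z ^ 2) ≤ (1 + Real.exp (-(k * z)))⁻¹ * Real.exp (-b * z ^ 2) := by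
          gcongr
      _ = f z := rfl
  have h4 : ∫ z in Set.Ioi (0:ℝ), (1/2) * Real.exp (-b * z ^ 2)
      = Real.sqrt (π / b) / 4 := by
    rw [MeasureTheory.integral_const_mul, integral_gaussian_Ioi]
    ring
  linarith

lemma lower_bound {b : ℝ} (hb : 0 < b) (k : ℝ) :
    Real.sqrt (π / b) / 4 ≤
      ∫ z : ℝ, (1 + Real.exp (-(k * z)))⁻¹ * Real.exp (-b * z ^ 2) := by
  rcases le_or_gt 0 k with hk | hk
  · exact lower_bound_half hb hk
  · have h := lower_bound_half hb (k := -k) (by linarith)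
    calc Real.sqrt (π / b) / 4
        ≤ ∫ z : ℝ, (1 + Real.exp (-(-k * z)))⁻¹ * Real.exp (-b * z ^ 2) := h
      _ = ∫ z : ℝ, (1 + Real.exp (-(k * z)))⁻¹ * Real.exp (-b * z ^ 2) := by
          rw [← integral_neg_eq_self
            (fun z : ℝ => (1 + Real.exp (-(k * z)))⁻¹ * Real.exp (-b * z ^ 2)) volume]
          congr 1
          funext z
          simp only [mul_neg, neg_neg, neg_mul]
          rw [neg_pow]
          norm_num

lemma dotProduct_sum' {d n : ℕ} (x : Fin d → ℝ) (v : Fin n → Fin d → ℝ) :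
    x ⬝ᵥ (∑ i, v i) = ∑ i, x ⬝ᵥ v i := by
  simp only [dotProduct, Finset.sum_apply, Finset.mul_sum]
  exact Finset.sum_comm

lemma vecMulVec_mulVec {d : ℕ} (v w x : Fin d → ℝ) :
    (Matrix.vecMulVec v w).mulVec x = (w ⬝ᵥ x) • v := by
  funext j
  simp only [Matrix.mulVec, Matrix.vecMulVec_apply, dotProduct, Pi.smul_apply,
    smul_eq_mul, Finset.sum_mul]
  exact Finset.sum_congr rfl fun k _ => by ring

lemma sum_mulVec' {d n : ℕ} (A : Fin n → Matrix (Fin d) (Fin d) ℝ) (x : Fin d → ℝ) :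
    (∑ i, A i).mulVec x = ∑ i, (A i).mulVec x := by
  funext j
  simp only [Matrix.mulVec, dotProduct, Finset.sum_apply, Matrix.sum_apply,
    Finset.sum_mul]
  exact Finset.sum_comm

lemma qform {d n : ℕ} (X : Fin n → Fin d → ℝ) (σ τ : ℝ) (x : Fin d → ℝ) :
    x ⬝ᵥ ((σ ^ 2 * (n : ℝ))⁻¹ • ∑ i, (X i ⬝ᵥ X i)⁻¹ • vecMulVec (X i) (X i)
        + (2 * τ) • (1 : Matrix (Fin d) (Fin d) ℝ)).mulVec x
      = (σ ^ 2 * (n : ℝ))⁻¹ * ∑ i, (X i ⬝ᵥ X i)⁻¹ * (X i ⬝ᵥ x) ^ 2 + 2 * τ * (x ⬝ᵥ x) := by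
  simp only [Matrix.add_mulVec, Matrix.smul_mulVec, Matrix.one_mulVec, sum_mulVec',
    vecMulVec_mulVec, dotProduct_add, dotProduct_smul, dotProduct_sum',
    smul_eq_mul]
  congr 1
  rw [Finset.mul_sum, Finset.mul_sum]
  refine Finset.sum_congr rfl fun i _ => ?_
  rw [dotProduct_comm x (X i)]
  ring

lemma isUnit_det_M {d n : ℕ} (hn : 0 < n) (X : Fin n → Fin d → ℝ) {σ τ : ℝ}
    (hσ : 0 < σ) (hτ : 0 < τ) :
    IsUnit ((σ ^ 2 * (n : ℝ))⁻¹ • ∑ i, (X i ⬝ᵥ X i)⁻¹ • vecMulVec (X i) (X i)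
        + (2 * τ) • (1 : Matrix (Fin d) (Fin d) ℝ)).det := by
  rw [← Matrix.isUnit_iff_isUnit_det, ← Matrix.mulVec_injective_iff_isUnit]
  intro u v h
  set M := (σ ^ 2 * (n : ℝ))⁻¹ • ∑ i, (X i ⬝ᵥ X i)⁻¹ • vecMulVec (X i) (X i)
      + (2 * τ) • (1 : Matrix (Fin d) (Fin d) ℝ) with hM
  have h0 : M.mulVec (u - v) = 0 := by
    rw [Matrix.mulVec_sub, h, sub_self]
  have hq := qform X σ τ (u - v)
  rw [← hM, h0, dotProduct_zero] at hq
  have hA : 0 ≤ (σ ^ 2 * (n : ℝ))⁻¹ * ∑ i, (X i ⬝ᵥ X i)⁻¹ * (X i ⬝ᵥ (u - v)) ^ 2 := by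
    apply mul_nonneg (by positivity)
    apply Finset.sum_nonneg
    intro i _
    apply mul_nonneg _ (sq_nonneg _)
    exact inv_nonneg.mpr (Finset.sum_nonneg fun j _ => mul_self_nonneg _)
  have hw : (u - v) ⬝ᵥ (u - v) ≤ 0 := by nlinarith
  have hw0 : (u - v) ⬝ᵥ (u - v) = 0 :=
    le_antisymm hw (Finset.sum_nonneg fun j _ => mul_self_nonneg _)
  have := dotProduct_self_eq_zero.mp hw0
  exact sub_eq_zero.mp this

end MinAux

open MeasureTheory MinAux

/-- In the logistic regression model, every minimizer `θ*` of `F` over `ℝ^d`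
satisfies `τ ‖θ*‖² ≤ ln 4`. -/
theorem minimizer_norm_bound
    (d n : ℕ) (hn : 0 < n) (X : Fin n → Fin d → ℝ) (hX : ∀ i, X i ≠ 0)
    (y : Fin n → ℝ) (hy : ∀ i, y i = 1 ∨ y i = -1)
    (σ τ : ℝ) (hσ : 0 < σ) (hτ : 0 < τ)
    (θstar : Fin d → ℝ) (hmin : ∀ θ, Fobj d n X y σ τ θstar ≤ Fobj d n X y σ τ θ) :
    τ * (θstar ⬝ᵥ θstar) ≤ Real.log 4 := by
  have hn' : (0:ℝ) < n := Nat.cast_pos.mpr hn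
  have hσ2 : (0:ℝ) < σ ^ 2 := by positivity
  set b : ℝ := (2 * σ ^ 2)⁻¹ with hbdef
  have hb : 0 < b := by positivity
  have hS : 0 < Real.sqrt (π / b) := Real.sqrt_pos.mpr (by positivity)
  have hexp : ∀ z : ℝ, Real.exp (-z ^ 2 / (2 * σ ^ 2)) = Real.exp (-b * z ^ 2) := by
    intro z; rw [hbdef]; congr 1; ring
  have hNpos : ∀ i, 0 < nrmX (X i) := fun i => Real.sqrt_pos.mpr
    (lt_of_le_of_ne (Finset.sum_nonneg fun j _ => mul_self_nonneg _)
      (fun h => hX i (dotProduct_self_eq_zero.mp h.symm)))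
  have hNsq : ∀ i, nrmX (X i) ^ 2 = X i ⬝ᵥ X i := fun i =>
    Real.sq_sqrt (Finset.sum_nonneg fun j _ => mul_self_nonneg _)
  set a : Fin n → ℝ := fun i => (X i ⬝ᵥ θstar) / (nrmX (X i) * σ ^ 2) with hadef
  have hsdot : ∀ (i : Fin n) (z : ℝ), sStat (X i) σ z ⬝ᵥ θstar = a i * z := by
    intro i z
    simp only [sStat, smul_dotProduct, smul_eq_mul, hadef]
    ring
  set I : Fin n → ℝ := fun i =>
    ∫ z : ℝ, (1 + Real.exp (-(y i * nrmX (X i) * z)))⁻¹ * Real.exp (a i * z)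
      * Real.exp (-b * z ^ 2) with hIdef
  -- rewriting F at θ*
  have hF1 : Fobj d n X y σ τ θstar
      = -(n : ℝ)⁻¹ * ∑ i, Real.log (I i) + Rpen d n X σ τ θstar := by
    unfold Fobj
    congr 2
    refine Finset.sum_congr rfl fun i _ => ?_
    congr 1
    refine MeasureTheory.integral_congr_ae (Filter.Eventually.of_forall fun z => ?_)
    simp only []
    rw [hsdot i z, hexp z]
  -- per-index upper bound at θ*
  have key1 : ∀ i, Real.log (I i) ≤ Real.log (Real.sqrt (π / b)) + (a i) ^ 2 / (4 * b) := by
    intro i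
    have hle : I i ≤ Real.sqrt (π / b) * Real.exp ((a i) ^ 2 / (4 * b)) := by
      rw [hIdef, ← integral_exp_lin_gauss hb (a i)]
      refine MeasureTheory.integral_mono (integrable_main hb (a i) (y i * nrmX (X i)))
        (integrable_exp_lin_gauss hb (a i)) fun z => ?_
      have h1 : (1 + Real.exp (-(y i * nrmX (X i) * z)))⁻¹ ≤ 1 := by
        rw [inv_le_one_iff₀]; right; nlinarith [Real.exp_pos (-(y i * nrmX (X i) * z))]
      calc (1 + Real.exp (-(y i * nrmX (X i) * z)))⁻¹ * Real.exp (a i * z)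
            * Real.exp (-b * z ^ 2)
          ≤ 1 * Real.exp (a i * z) * Real.exp (-b * z ^ 2) := by gcongr
        _ = Real.exp (a i * z) * Real.exp (-b * z ^ 2) := by ring
    have hpos : 0 < I i := by
      rw [hIdef]
      rw [integral_pos_iff_support_of_nonneg (fun z => by positivity)
        (integrable_main hb (a i) (y i * nrmX (X i)))]
      have hsupp : Function.support (fun z : ℝ =>
          (1 + Real.exp (-(y i * nrmX (X i) * z)))⁻¹ * Real.exp (a i * z)
            * Real.exp (-b * z ^ 2)) = Set.univ :=
        Set.eq_univ_of_forall fun z => Function.mem_support.mpr (by positivity)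
      rw [hsupp]
      simp
    calc Real.log (I i) ≤ Real.log (Real.sqrt (π / b) * Real.exp ((a i) ^ 2 / (4 * b))) :=
          Real.log_le_log hpos hle
      _ = Real.log (Real.sqrt (π / b)) + (a i) ^ 2 / (4 * b) := by
          rw [Real.log_mul hS.ne' (Real.exp_ne_zero _), Real.log_exp]
  -- the penalty at θ*
  have hOmega : (OmegaMat d n X σ τ)⁻¹
      = (σ ^ 2 * (n : ℝ))⁻¹ • ∑ i, (X i ⬝ᵥ X i)⁻¹ • vecMulVec (X i) (X i)
        + (2 * τ) • (1 : Matrix (Fin d) (Fin d) ℝ) := by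
    rw [OmegaMat]
    exact Matrix.nonsing_inv_nonsing_inv _ (isUnit_det_M hn X hσ hτ)
  have hRpen : Rpen d n X σ τ θstar
      = (n : ℝ)⁻¹ * ∑ i, (a i) ^ 2 / (4 * b) + τ * (θstar ⬝ᵥ θstar) := by
    rw [Rpen, hOmega, qform]
    have hterm : ∀ i : Fin n, (a i) ^ 2 / (4 * b)
        = (2 * σ ^ 2)⁻¹ * ((X i ⬝ᵥ X i)⁻¹ * (X i ⬝ᵥ θstar) ^ 2) := by
      intro i
      simp only [hadef]
      rw [← hNsq i, hbdef]
      have h1 : nrmX (X i) ≠ 0 := (hNpos i).ne'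
      field_simp
      ring
    simp only [hterm]
    rw [← Finset.mul_sum]
    field_simp
  -- lower bound on F(θ*)
  have main1 : -Real.log (Real.sqrt (π / b)) + τ * (θstar ⬝ᵥ θstar)
      ≤ Fobj d n X y σ τ θstar := by
    rw [hF1, hRpen]
    have hsum : ∑ i, Real.log (I i)
        ≤ (n : ℝ) * Real.log (Real.sqrt (π / b)) + ∑ i, (a i) ^ 2 / (4 * b) := by
      calc ∑ i, Real.log (I i)
          ≤ ∑ i, (Real.log (Real.sqrt (π / b)) + (a i) ^ 2 / (4 * b)) :=
            Finset.sum_le_sum fun i _ => key1 i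
        _ = (n : ℝ) * Real.log (Real.sqrt (π / b)) + ∑ i, (a i) ^ 2 / (4 * b) := by
            rw [Finset.sum_add_distrib, Finset.sum_const, Finset.card_univ,
              Fintype.card_fin, nsmul_eq_mul]
    have h2 := mul_le_mul_of_nonneg_left hsum (inv_nonneg.mpr hn'.le)
    have h3 : (n : ℝ)⁻¹ * ((n : ℝ) * Real.log (Real.sqrt (π / b)) + ∑ i, (a i) ^ 2 / (4 * b))
        = Real.log (Real.sqrt (π / b)) + (n : ℝ)⁻¹ * ∑ i, (a i) ^ 2 / (4 * b) := by
      rw [mul_add, ← mul_assoc, inv_mul_cancel₀ hn'.ne', one_mul]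
    rw [h3] at h2
    nlinarith [h2]
  -- upper bound on F(0)
  have hF0 : Fobj d n X y σ τ 0
      = -(n : ℝ)⁻¹ * ∑ i, Real.log (∫ z : ℝ,
          (1 + Real.exp (-(y i * nrmX (X i) * z)))⁻¹ * Real.exp (-b * z ^ 2)) := by
    unfold Fobj
    have hR0 : Rpen d n X σ τ (0 : Fin d → ℝ) = 0 := by
      simp [Rpen, zero_dotProduct]
    rw [hR0, add_zero]
    congr 1
    refine Finset.sum_congr rfl fun i _ => ?_
    congr 1
    refine MeasureTheory.integral_congr_ae (Filter.Eventually.of_forall fun z => ?_)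
    simp only []
    rw [dotProduct_zero, Real.exp_zero, mul_one, hexp z]
  have main2 : Fobj d n X y σ τ 0 ≤ Real.log 4 - Real.log (Real.sqrt (π / b)) := by
    rw [hF0]
    have key2 : ∀ i : Fin n, Real.log (Real.sqrt (π / b)) - Real.log 4
        ≤ Real.log (∫ z : ℝ,
            (1 + Real.exp (-(y i * nrmX (X i) * z)))⁻¹ * Real.exp (-b * z ^ 2)) := by
      intro i
      have h := lower_bound hb (y i * nrmX (X i))
      have h2 := Real.log_le_log (by positivity : (0:ℝ) < Real.sqrt (π / b) / 4) h
      rwa [Real.log_div hS.ne' (by norm_num)] at h2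
    have hsum2 : (n : ℝ) * (Real.log (Real.sqrt (π / b)) - Real.log 4)
        ≤ ∑ i, Real.log (∫ z : ℝ,
            (1 + Real.exp (-(y i * nrmX (X i) * z)))⁻¹ * Real.exp (-b * z ^ 2)) := by
      calc (n : ℝ) * (Real.log (Real.sqrt (π / b)) - Real.log 4)
          = ∑ _i : Fin n, (Real.log (Real.sqrt (π / b)) - Real.log 4) := by
            rw [Finset.sum_const, Finset.card_univ, Fintype.card_fin, nsmul_eq_mul]
        _ ≤ _ := Finset.sum_le_sum fun i _ => key2 i
    have h2 := mul_le_mul_of_nonneg_left hsum2 (inv_nonneg.mpr hn'.le)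
    have h3 : (n : ℝ)⁻¹ * ((n : ℝ) * (Real.log (Real.sqrt (π / b)) - Real.log 4))
        = Real.log (Real.sqrt (π / b)) - Real.log 4 := by
      rw [← mul_assoc, inv_mul_cancel₀ hn'.ne', one_mul]
    rw [h3] at h2
    linarith
  have hfinal := hmin 0
  linarith
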